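/- Let R be a commutative ring of prime characteristic p that is Frobenius split and let S be a module-finite R-algebra. Then the trace ideal τ_{S/R} is a radical ideal of R. -/

import Mathlib

/-- A `p^{-e}`-linear map on `R`: additive and `φ (r^{p^e} * x) = r * φ x`. -/
def IsPInvLinear {R : Type*} [CommRing R] (p e : ℕ) (φ : R → R) : Prop :=
  (∀ x y : R, φ (x + y) = φ x + φ y) ∧ ∀ r x : R, φ (r ^ p ^ e * x) = r * φ x

/-- `R` is Frobenius split if there is a `p^{-1}`-linear map sending `1` to `1`. -/
def FrobeniusSplit (R : Type*) [CommRing R] (p : ℕ) : Prop :=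
  ∃ φ : R → R, IsPInvLinear p 1 φ ∧ φ 1 = 1

/-- The trace ideal `τ_{S/R}`: the image of the evaluation-at-1 map `Hom_R(S,R) → R`. -/
def traceIdeal (R S : Type*) [CommRing R] [CommRing S] [Algebra R S] : Ideal R :=
  LinearMap.range ((LinearMap.applyₗ (1 : S)) : (S →ₗ[R] R) →ₗ[R] R)

lemma key_lemma (p : ℕ) [Fact p.Prime]
    (R S : Type*) [CommRing R] [CharP R p] [CommRing S] [Algebra R S]
    (hR : FrobeniusSplit R p) (r : R) (h : r ^ p ∈ traceIdeal R S) :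
    r ∈ traceIdeal R S := by
  obtain ⟨φ, ⟨hadd, hlin⟩, hφ1⟩ := hR
  obtain ⟨f, hf⟩ := h
  have hp : p.Prime := Fact.out
  have hpS : (p : S) = 0 := by
    rw [(map_natCast (algebraMap R S) p).symm, CharP.cast_eq_zero R p, map_zero]
  have hlin' : ∀ a x : R, φ (a ^ p * x) = a * φ x := by
    intro a x
    have := hlin a x
    rwa [pow_one] at this
  -- the map s ↦ φ (f (s ^ p)) is R-linear
  refine ⟨{ toFun := fun s => φ (f (s ^ p)),
            map_add' := ?_, map_smul' := ?_ }, ?_⟩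
  · intro x y
    have : (x + y) ^ p = x ^ p + y ^ p := by
      rw [add_pow_prime_eq hp, hpS, zero_mul, zero_mul, zero_mul, add_zero]
    show φ (f ((x + y) ^ p)) = φ (f (x ^ p)) + φ (f (y ^ p))
    rw [this, map_add, hadd]
  · intro a s
    simp only [RingHom.id_apply, smul_pow, map_smul, smul_eq_mul]
    exact hlin' a (f (s ^ p))
  · have hfa : f 1 = r ^ p := hf
    show φ (f (1 ^ p)) = r
    rw [one_pow, hfa]
    have := hlin' r 1
    rwa [mul_one, hφ1, mul_one] at this

theorem trace_ideal_isRadical (p : ℕ) [Fact p.Prime]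
    (R S : Type*) [CommRing R] [CharP R p] [CommRing S] [Algebra R S]
    [Module.Finite R S] (hR : FrobeniusSplit R p) :
    (traceIdeal R S).IsRadical := by
  intro r hr
  obtain ⟨n, hn⟩ := hr
  have hp : p.Prime := Fact.out
  obtain ⟨e, he⟩ : ∃ e : ℕ, n ≤ p ^ e :=
    ⟨n, le_trans (Nat.le_of_lt (Nat.lt_two_pow_self (n := n))) (Nat.pow_le_pow_left hp.two_le n)⟩
  have hpe : r ^ p ^ e ∈ traceIdeal R S := by
    have : r ^ p ^ e = r ^ (p ^ e - n) * r ^ n := by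
      rw [← pow_add, Nat.sub_add_cancel he]
    rw [this]
    exact Ideal.mul_mem_left _ _ hn
  clear hn he
  induction e with
  | zero => simpa using hpe
  | succ e ih =>
    apply ih
    apply key_lemma p R S hR
    rw [← pow_mul, ← pow_succ] at *
    exact hpe
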